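/- For every ε > 0, every twice continuously differentiable x : [0,l] → ℝ with x(0) = x(l) = 0, every y, ξ₂ ∈ ℝ, and every continuously differentiable ξ₁ : [0,l] → ℝ with ξ₁(0) = ξ₁(l) = 0, the following lower estimate holds: 2y·(c² y + ∫₀ˡ D(z) x(z) dz + ξ₂) + 2∫₀ˡ x''(z)·(a² x''(z) + Φ(x(z)) + B(z)·y + ξ₁(z)) dz ≥ (2c² − ε)·y² + (2π²a²/l² − ε)·‖x'‖²_{L²} − 2·((l/π)·‖D‖_{L²} + ‖B'‖_{L²})·‖x'‖_{L²}·|y| − ε⁻¹·(‖ξ₁'‖²_{L²} + ξ₂²). -/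

import Mathlib

set_option maxHeartbeats 1000000

open Set Real MeasureTheory intervalIntegral Filter Topology

open Set Real MeasureTheory intervalIntegral Filter Topology

lemma II_of_cont {l : ℝ} (hl : 0 ≤ l) {h : ℝ → ℝ} (hh : ContinuousOn h (Icc 0 l)) :
    IntervalIntegrable h volume 0 l :=
  ContinuousOn.intervalIntegrable (by rwa [uIcc_of_le hl])

-- Cauchy-Schwarz for interval integrals of continuous functions
lemma cs_abs (l : ℝ) (hl : 0 ≤ l) (f g : ℝ → ℝ)
    (hf : ContinuousOn f (Icc 0 l)) (hg : ContinuousOn g (Icc 0 l)) :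
    |∫ z in (0:ℝ)..l, f z * g z| ≤
      Real.sqrt (∫ z in (0:ℝ)..l, (f z)^2) * Real.sqrt (∫ z in (0:ℝ)..l, (g z)^2) := by
  have hif : IntervalIntegrable (fun z => (f z)^2) volume 0 l := II_of_cont hl (hf.pow 2)
  have hig : IntervalIntegrable (fun z => (g z)^2) volume 0 l := II_of_cont hl (hg.pow 2)
  have hifg : IntervalIntegrable (fun z => f z * g z) volume 0 l := II_of_cont hl (hf.mul hg)
  set A := ∫ z in (0:ℝ)..l, (f z)^2 with hA'
  set Bv := ∫ z in (0:ℝ)..l, f z * g z with hB'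
  set C := ∫ z in (0:ℝ)..l, (g z)^2 with hC'
  have hA : 0 ≤ A := intervalIntegral.integral_nonneg hl (fun u _ => sq_nonneg _)
  have hC : 0 ≤ C := intervalIntegral.integral_nonneg hl (fun u _ => sq_nonneg _)
  have key : Bv^2 ≤ A * C := by
    have h := discrim_le_zero (a := C) (b := 2*Bv) (c := A) ?_
    · rw [discrim] at h; nlinarith
    · intro t
      have h1 : (0:ℝ) ≤ ∫ z in (0:ℝ)..l, (g z * t + f z)^2 :=
        intervalIntegral.integral_nonneg hl (fun u _ => sq_nonneg _)
      have h2 : (∫ z in (0:ℝ)..l, (g z * t + f z)^2)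
          = C * (t*t) + 2*Bv*t + A := by
        have : (fun z => (g z * t + f z)^2)
            = fun z => (t*t) * (g z)^2 + ((2*t) * (f z * g z) + (f z)^2) := by
          funext z; ring
        rw [this, intervalIntegral.integral_add ((hig).const_mul (t*t))
            (((hifg).const_mul (2*t)).add hif),
          intervalIntegral.integral_add ((hifg).const_mul (2*t)) hif,
          intervalIntegral.integral_const_mul, intervalIntegral.integral_const_mul]
        rw [← hA', ← hB', ← hC']; ring
      linarith [h2 ▸ h1]
  calc |Bv| = Real.sqrt (Bv^2) := (Real.sqrt_sq_eq_abs _).symm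
    _ ≤ Real.sqrt (A*C) := Real.sqrt_le_sqrt key
    _ = Real.sqrt A * Real.sqrt C := Real.sqrt_mul hA C

-- sin t / t → 1
lemma sin_div_self_tendsto : Tendsto (fun t : ℝ => Real.sin t / t) (𝓝[≠] 0) (𝓝 1) := by
  have h := (Real.hasDerivAt_sin 0)
  rw [hasDerivAt_iff_tendsto_slope] at h
  rw [Real.cos_zero] at h
  refine h.congr (fun t => ?_)
  rw [slope_def_field]
  simp

lemma tendsto_aux (k : ℝ) (hk : 0 < k) (s : ℝ → ℝ) (L : ℝ)
    (hs : Tendsto s (𝓝[>] (0:ℝ)) (𝓝 L)) :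
    Tendsto (fun δ => (s δ)^2 * δ^2 * (k * Real.cos (k*δ) / Real.sin (k*δ)))
      (𝓝[>] (0:ℝ)) (𝓝 0) := by
  have hmap : Tendsto (fun δ : ℝ => k * δ) (𝓝[>] (0:ℝ)) (𝓝[≠] (0:ℝ)) := by
    apply tendsto_nhdsWithin_of_tendsto_nhds_of_eventually_within
    · have : Tendsto (fun δ : ℝ => k * δ) (𝓝 0) (𝓝 (k * 0)) :=
        (continuous_const.mul continuous_id).tendsto 0
      simpa using this.mono_left nhdsWithin_le_nhds
    · filter_upwards [self_mem_nhdsWithin] with δ (hδ : 0 < δ)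
      exact ne_of_gt (mul_pos hk hδ)
  have h1 : Tendsto (fun δ : ℝ => k * δ / Real.sin (k * δ)) (𝓝[>] (0:ℝ)) (𝓝 1) := by
    have := (sin_div_self_tendsto.comp hmap).inv₀ one_ne_zero
    simp only [inv_one] at this
    refine this.congr (fun δ => ?_)
    simp [Function.comp, inv_div]
  have h2 : Tendsto (fun δ : ℝ => δ * Real.cos (k * δ)) (𝓝[>] (0:ℝ)) (𝓝 0) := by
    have : Tendsto (fun δ : ℝ => δ * Real.cos (k * δ)) (𝓝 (0:ℝ)) (𝓝 (0 * Real.cos (k*0))) :=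
      (Continuous.mul continuous_id (Real.continuous_cos.comp (continuous_const.mul continuous_id))).tendsto 0
    simpa using this.mono_left nhdsWithin_le_nhds
  have hfull : Tendsto (fun δ : ℝ => (s δ)^2 * ((k * δ / Real.sin (k*δ)) * (δ * Real.cos (k*δ))))
      (𝓝[>] (0:ℝ)) (𝓝 (L^2 * (1 * 0))) := ((hs.pow 2).mul (h1.mul h2))
  have : L^2 * (1*0) = 0 := by ring
  rw [this] at hfull
  refine hfull.congr' ?_
  filter_upwards [self_mem_nhdsWithin] with δ (hδ : 0 < δ)
  rcases eq_or_ne (Real.sin (k*δ)) 0 with h | h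
  · simp [h, div_zero]
  · field_simp
lemma wirtinger (l : ℝ) (hl : 0 < l) (f f' : ℝ → ℝ)
    (hf : ∀ z ∈ Icc 0 l, HasDerivAt f (f' z) z) (hf'c : ContinuousOn f' (Icc 0 l))
    (h0 : f 0 = 0) (hfl : f l = 0) :
    ∫ z in (0:ℝ)..l, (f z)^2 ≤ (l/π)^2 * ∫ z in (0:ℝ)..l, (f' z)^2 := by
  obtain ⟨k, hkdef⟩ : ∃ k : ℝ, k = π / l := ⟨_, rfl⟩
  have hπ := Real.pi_pos
  have hk : 0 < k := hkdef ▸ div_pos hπ hl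
  have hkl : k * l = π := by rw [hkdef]; field_simp
  have hfc : ContinuousOn f (Icc 0 l) := fun z hz => (hf z hz).continuousAt.continuousWithinAt
  -- H is the integrand f'^2 - k^2 f^2
  set H : ℝ → ℝ := fun z => (f' z)^2 - k^2 * (f z)^2 with hHdef
  have hHc : ContinuousOn H (Icc 0 l) := (hf'c.pow 2).sub (continuousOn_const.mul (hfc.pow 2))
  have hHI : IntervalIntegrable H volume 0 l := II_of_cont hl.le hHc
  -- bound for H
  obtain ⟨M, hM⟩ := (isCompact_Icc (a := (0:ℝ)) (b := l)).exists_bound_of_continuousOn hHc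
  -- the auxiliary function g
  set g : ℝ → ℝ := fun z => (f z)^2 * (k * Real.cos (k*z) / Real.sin (k*z)) with hgdef
  -- sin positivity on Ioo
  have hsin : ∀ z ∈ Ioo (0:ℝ) l, 0 < Real.sin (k*z) := by
    intro z hz
    exact Real.sin_pos_of_pos_of_lt_pi (mul_pos hk hz.1)
      (by rw [← hkl]; exact (mul_lt_mul_iff_right₀ hk).mpr hz.2)
  -- derivative of g on Ioo 0 l
  have hg' : ∀ z ∈ Ioo (0:ℝ) l, HasDerivAt g
      (2 * f z * f' z * (k * Real.cos (k*z) / Real.sin (k*z))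
        - (f z)^2 * (k^2 / (Real.sin (k*z))^2)) z := by
    intro z hz
    have hsne : Real.sin (k*z) ≠ 0 := ne_of_gt (hsin z hz)
    have hfz : HasDerivAt (fun w => (f w)^2) (2 * f z * f' z) z := by
      have := (hf z (Ioo_subset_Icc_self hz)).fun_pow 2
      simpa [mul_comm, mul_assoc, mul_left_comm] using this
    have hkz : HasDerivAt (fun w : ℝ => k * w) k z := by
      simpa using (hasDerivAt_id z).const_mul k
    have hsinz : HasDerivAt (fun w => Real.sin (k*w)) (Real.cos (k*z) * k) z :=
      (Real.hasDerivAt_sin (k*z)).comp z hkz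
    have hcosz : HasDerivAt (fun w => Real.cos (k*w)) (-Real.sin (k*z) * k) z :=
      (Real.hasDerivAt_cos (k*z)).comp z hkz
    have hnum : HasDerivAt (fun w => k * Real.cos (k*w)) (k * (-Real.sin (k*z) * k)) z :=
      hcosz.const_mul k
    have hq : HasDerivAt (fun w => k * Real.cos (k*w) / Real.sin (k*w))
        ((k * (-Real.sin (k*z) * k) * Real.sin (k*z)
          - k * Real.cos (k*z) * (Real.cos (k*z) * k)) / (Real.sin (k*z))^2) z :=
      hnum.div hsinz hsne
    have hq' : HasDerivAt (fun w => k * Real.cos (k*w) / Real.sin (k*w))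
        (- (k^2 / (Real.sin (k*z))^2)) z := by
      convert hq using 1
      have hpy := Real.sin_sq_add_cos_sq (k*z)
      have hnum : (k * (-Real.sin (k*z) * k) * Real.sin (k*z)
          - k * Real.cos (k*z) * (Real.cos (k*z) * k)) = -k^2 := by
        linear_combination (-(k^2)) * hpy
      rw [hnum, neg_div]
    have := hfz.fun_mul hq'
    refine this.congr_deriv ?_
    ring
  -- pointwise inequality on Ioo: H z - g' z = square ≥ 0
  have hpt : ∀ z ∈ Ioo (0:ℝ) l,
      2 * f z * f' z * (k * Real.cos (k*z) / Real.sin (k*z))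
        - (f z)^2 * (k^2 / (Real.sin (k*z))^2) ≤ H z := by
    intro z hz
    have hsne : Real.sin (k*z) ≠ 0 := ne_of_gt (hsin z hz)
    have hpy := Real.sin_sq_add_cos_sq (k*z)
    have hsq : 0 ≤ (f' z - f z * (k * Real.cos (k*z) / Real.sin (k*z)))^2 := sq_nonneg _
    have hq2 : k^2/(Real.sin (k*z))^2
        = k^2 + (k * Real.cos (k*z) / Real.sin (k*z))^2 := by
      field_simp
      linear_combination -hpy
    have hexp : (f' z - f z * (k * Real.cos (k*z) / Real.sin (k*z)))^2
        = H z - (2 * f z * f' z * (k * Real.cos (k*z) / Real.sin (k*z))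
          - (f z)^2 * (k^2 / (Real.sin (k*z))^2)) := by
      rw [hHdef, hq2]
      ring
    linarith [hexp ▸ hsq]
  -- main estimate for each δ ∈ Ioo 0 (l/2)
  have hmain : ∀ δ ∈ Ioo (0:ℝ) (l/2),
      g (l - δ) - g δ - 2 * |M| * δ ≤ ∫ z in (0:ℝ)..l, H z := by
    intro δ hδ
    have hδ0 : 0 < δ := hδ.1
    have hδl : δ < l - δ := by linarith [hδ.2]
    have hsub : Icc δ (l-δ) ⊆ Ioo 0 l := fun z hz => ⟨lt_of_lt_of_le hδ0 hz.1, lt_of_le_of_lt hz.2 (by linarith)⟩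
    have hsubIcc : Icc δ (l-δ) ⊆ Icc 0 l := hsub.trans Ioo_subset_Icc_self
    have huIδ : uIcc δ (l-δ) = Icc δ (l-δ) := uIcc_of_le hδl.le
    -- continuity of g' on Icc δ (l-δ)
    have hG'c : ContinuousOn (fun z => 2 * f z * f' z * (k * Real.cos (k*z) / Real.sin (k*z))
        - (f z)^2 * (k^2 / (Real.sin (k*z))^2)) (Icc δ (l-δ)) := by
      have hsinc : ContinuousOn (fun z => Real.sin (k*z)) (Icc δ (l-δ)) :=
        (Real.continuous_sin.comp (continuous_const.mul continuous_id)).continuousOn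
      have hcosc : ContinuousOn (fun z => Real.cos (k*z)) (Icc δ (l-δ)) :=
        (Real.continuous_cos.comp (continuous_const.mul continuous_id)).continuousOn
      have hsne : ∀ z ∈ Icc δ (l-δ), Real.sin (k*z) ≠ 0 := fun z hz => ne_of_gt (hsin z (hsub hz))
      exact (((continuousOn_const.mul (hfc.mono hsubIcc)).mul (hf'c.mono hsubIcc)).mul
          ((continuousOn_const.mul hcosc).div hsinc hsne)).sub
        (((hfc.mono hsubIcc).pow 2).mul ((continuousOn_const.div (hsinc.pow 2)
          (fun z hz => pow_ne_zero 2 (hsne z hz)))))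
    have hG'I : IntervalIntegrable _ volume δ (l-δ) :=
      ContinuousOn.intervalIntegrable (by rwa [huIδ])
    have hftc : ∫ z in δ..(l-δ), (2 * f z * f' z * (k * Real.cos (k*z) / Real.sin (k*z))
        - (f z)^2 * (k^2 / (Real.sin (k*z))^2)) = g (l-δ) - g δ :=
      intervalIntegral.integral_eq_sub_of_hasDerivAt
        (fun z hz => hg' z (hsub (huIδ ▸ hz))) hG'I
    have hHIδ : IntervalIntegrable H volume δ (l-δ) :=
      ContinuousOn.intervalIntegrable (by rw [huIδ]; exact hHc.mono hsubIcc)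
    have hge : g (l-δ) - g δ ≤ ∫ z in δ..(l-δ), H z := by
      rw [← hftc]
      apply intervalIntegral.integral_mono_on hδl.le hG'I hHIδ
      intro z hz
      exact hpt z (hsub hz)
    -- split the full integral
    have i1 : IntervalIntegrable H volume 0 δ :=
      hHI.mono_set (by rw [uIcc_of_le hl.le, uIcc_of_le hδ0.le]; exact Icc_subset_Icc le_rfl (by linarith))
    have i2 : IntervalIntegrable H volume δ (l-δ) :=
      hHI.mono_set (by rw [uIcc_of_le hl.le, uIcc_of_le hδl.le]; exact Icc_subset_Icc hδ0.le (by linarith))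
    have i12 : IntervalIntegrable H volume 0 (l-δ) :=
      hHI.mono_set (by rw [uIcc_of_le hl.le, uIcc_of_le (by linarith : (0:ℝ) ≤ l - δ)]; exact Icc_subset_Icc le_rfl (by linarith))
    have i3 : IntervalIntegrable H volume (l-δ) l :=
      hHI.mono_set (by rw [uIcc_of_le hl.le, uIcc_of_le (by linarith : l - δ ≤ l)]; exact Icc_subset_Icc (by linarith) le_rfl)
    have e1 : (∫ z in (0:ℝ)..δ, H z) + (∫ z in δ..(l-δ), H z) = ∫ z in (0:ℝ)..(l-δ), H z :=
      intervalIntegral.integral_add_adjacent_intervals i1 i2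
    have e2 : (∫ z in (0:ℝ)..(l-δ), H z) + (∫ z in (l-δ)..l, H z) = ∫ z in (0:ℝ)..l, H z :=
      intervalIntegral.integral_add_adjacent_intervals i12 i3
    have hsplit : (∫ z in (0:ℝ)..l, H z)
        = (∫ z in (0:ℝ)..δ, H z) + (∫ z in δ..(l-δ), H z) + (∫ z in (l-δ)..l, H z) := by
      linarith
    have hb1 : |∫ z in (0:ℝ)..δ, H z| ≤ |M| * δ := by
      have := intervalIntegral.norm_integral_le_of_norm_le_const
        (C := |M|) (f := H) (a := 0) (b := δ) ?_
      · simpa [abs_of_nonneg hδ0.le] using this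
      · intro z hz
        rw [uIoc_of_le hδ0.le] at hz
        exact le_trans (hM z ⟨hz.1.le, le_trans hz.2 (by linarith)⟩) (le_abs_self M)
    have hb2 : |∫ z in (l-δ)..l, H z| ≤ |M| * δ := by
      have := intervalIntegral.norm_integral_le_of_norm_le_const
        (C := |M|) (f := H) (a := l-δ) (b := l) ?_
      · have h2 : |l - (l-δ)| = δ := by rw [abs_of_nonneg (by linarith)]; ring_nf
        rw [h2] at this
        exact this
      · intro z hz
        rw [uIoc_of_le (by linarith : l - δ ≤ l)] at hz
        exact le_trans (hM z ⟨by linarith [hz.1], hz.2⟩) (le_abs_self M)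
    have h1 := abs_le.mp hb1
    have h2 := abs_le.mp hb2
    rw [hsplit]
    linarith
  -- take the limit δ → 0⁺
  have hT1 : Tendsto (fun δ => g δ) (𝓝[>] (0:ℝ)) (𝓝 0) := by
    have hslope : Tendsto (fun δ => f δ / δ) (𝓝[>] (0:ℝ)) (𝓝 (f' 0)) := by
      have h := hasDerivAt_iff_tendsto_slope.mp (hf 0 ⟨le_refl 0, hl.le⟩)
      have h2 := h.mono_left (nhdsWithin_mono 0 (fun z (hz : z ∈ Ioi (0:ℝ)) => ne_of_gt hz))
      refine h2.congr (fun δ => ?_)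
      rw [slope_def_field, h0]; simp [div_eq_inv_mul]
    have := tendsto_aux k hk (fun δ => f δ / δ) (f' 0) hslope
    refine this.congr' ?_
    filter_upwards [self_mem_nhdsWithin] with δ (hδ : 0 < δ)
    show (f δ/δ)^2 * δ^2 * (k * Real.cos (k*δ) / Real.sin (k*δ)) = g δ
    rw [hgdef]
    simp only
    rcases eq_or_ne (Real.sin (k*δ)) 0 with h | h
    · simp [h]
    · field_simp
  have hT2 : Tendsto (fun δ => g (l - δ)) (𝓝[>] (0:ℝ)) (𝓝 0) := by
    have hslope : Tendsto (fun δ => f (l-δ) / δ) (𝓝[>] (0:ℝ)) (𝓝 (-(f' l))) := by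
      have h := hasDerivAt_iff_tendsto_slope.mp (hf l ⟨hl.le, le_refl l⟩)
      have hcomp : Tendsto (fun δ : ℝ => l - δ) (𝓝[>] (0:ℝ)) (𝓝[≠] l) := by
        apply tendsto_nhdsWithin_of_tendsto_nhds_of_eventually_within
        · have : Tendsto (fun δ : ℝ => l - δ) (𝓝 0) (𝓝 (l - 0)) :=
            (continuous_const.sub continuous_id).tendsto 0
          simpa using this.mono_left nhdsWithin_le_nhds
        · filter_upwards [self_mem_nhdsWithin] with δ (hδ : 0 < δ)
          simp only [mem_compl_iff, mem_singleton_iff]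
          intro hcon
          nlinarith [sub_eq_self.mp hcon]
      have h2 := (h.comp hcomp).neg
      refine (h2 : Tendsto _ _ (𝓝 (-(f' l)))).congr (fun δ => ?_)
      simp only [Function.comp, slope_def_field, hfl, sub_zero]
      have he : l - δ - l = -δ := by ring
      rw [he, div_neg, neg_neg]
    have := tendsto_aux k hk (fun δ => f (l-δ) / δ) (-(f' l)) hslope
    have hneg := this.neg
    rw [neg_zero] at hneg
    refine hneg.congr' ?_
    filter_upwards [self_mem_nhdsWithin] with δ (hδ : 0 < δ)
    show -((f (l-δ)/δ)^2 * δ^2 * (k * Real.cos (k*δ) / Real.sin (k*δ))) = g (l-δ)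
    rw [hgdef]
    simp only
    have hsin' : Real.sin (k*(l-δ)) = Real.sin (k*δ) := by
      rw [mul_sub, hkl, Real.sin_pi_sub]
    have hcos' : Real.cos (k*(l-δ)) = -Real.cos (k*δ) := by
      rw [mul_sub, hkl, Real.cos_pi_sub]
    rw [hsin', hcos']
    rcases eq_or_ne (Real.sin (k*δ)) 0 with h | h
    · simp [h]
    · field_simp
  have hT3 : Tendsto (fun δ : ℝ => 2 * |M| * δ) (𝓝[>] (0:ℝ)) (𝓝 0) := by
    have : Tendsto (fun δ : ℝ => 2 * |M| * δ) (𝓝 0) (𝓝 (2 * |M| * 0)) :=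
      (continuous_const.mul continuous_id).tendsto 0
    simpa using this.mono_left nhdsWithin_le_nhds
  have hT : Tendsto (fun δ => g (l - δ) - g δ - 2 * |M| * δ) (𝓝[>] (0:ℝ)) (𝓝 0) := by
    have := (hT2.sub hT1).sub hT3
    simpa using this
  have hfinal : (0:ℝ) ≤ ∫ z in (0:ℝ)..l, H z := by
    refine le_of_tendsto hT ?_
    filter_upwards [Ioo_mem_nhdsGT_of_mem (by constructor <;> [rfl; positivity] : (0:ℝ) ∈ Ico 0 (l/2))] with δ hδ
    exact hmain δ hδ
  -- conclude
  have hlin : (∫ z in (0:ℝ)..l, H z)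
      = (∫ z in (0:ℝ)..l, (f' z)^2) - k^2 * ∫ z in (0:ℝ)..l, (f z)^2 := by
    rw [hHdef]
    rw [intervalIntegral.integral_sub (II_of_cont hl.le (hf'c.fun_pow 2))
      ((II_of_cont hl.le (hfc.fun_pow 2)).const_mul (k^2)), intervalIntegral.integral_const_mul]
  rw [hlin] at hfinal
  have hk2 : (l/π)^2 * k^2 = 1 := by
    rw [hkdef]; field_simp
  have h1 : k^2 * ∫ z in (0:ℝ)..l, (f z)^2 ≤ ∫ z in (0:ℝ)..l, (f' z)^2 := by linarith
  have h2 := mul_le_mul_of_nonneg_left h1 (sq_nonneg (l/π))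
  calc (∫ z in (0:ℝ)..l, (f z)^2)
      = (l/π)^2 * (k^2 * ∫ z in (0:ℝ)..l, (f z)^2) := by rw [← mul_assoc, hk2, one_mul]
    _ ≤ (l/π)^2 * ∫ z in (0:ℝ)..l, (f' z)^2 := h2

lemma young (ε A B : ℝ) (hε : 0 < ε) : 2 * A * B ≤ ε * A^2 + ε⁻¹ * B^2 := by
  have h1 : ε * ε⁻¹ = 1 := mul_inv_cancel₀ hε.ne'
  nlinarith [mul_nonneg (inv_nonneg.mpr hε.le) (sq_nonneg (ε * A - B))]

/-- `‖f‖_{L²}` on `[0,l]`. -/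
noncomputable def L2norm (l : ℝ) (f : ℝ → ℝ) : ℝ :=
  Real.sqrt (∫ z in (0:ℝ)..l, (f z)^2)

/-- lower estimate for `Ẇ` in the proof of Proposition 3:
`2y·(c²y + ∫₀ˡ D x + ξ₂) + 2∫₀ˡ x''·(a²x'' + Φ(x) + B y + ξ₁)
  ≥ (2c² − ε)y² + (2π²a²/l² − ε)‖x'‖²_{L²}
    − 2((l/π)‖D‖_{L²} + ‖B'‖_{L²})‖x'‖_{L²}|y| − ε⁻¹(‖ξ₁'‖²_{L²} + ξ₂²)`. -/
theorem stmt8 (l a c : ℝ) (hl : 0 < l) (ha : 0 < a) (hc : 0 < c)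
    (Φ Φ' : ℝ → ℝ) (hΦd : ∀ s, HasDerivAt Φ (Φ' s) s) (hΦ'c : Continuous Φ')
    (hΦ'le : ∀ s : ℝ, Φ' s ≤ 0) (hΦ : ∀ s : ℝ, s * Φ s ≤ 0)
    (D : ℝ → ℝ) (hD : ContinuousOn D (Icc 0 l))
    (B B' : ℝ → ℝ) (hB : ∀ z ∈ Icc (0:ℝ) l, HasDerivAt B (B' z) z)
    (hB'c : ContinuousOn B' (Icc 0 l)) (hB0 : B 0 = 0) (hBl : B l = 0)
    (ε : ℝ) (hε : 0 < ε)
    (x x' x'' : ℝ → ℝ)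
    (hx : ∀ z ∈ Icc (0:ℝ) l, HasDerivAt x (x' z) z)
    (hx' : ∀ z ∈ Icc (0:ℝ) l, HasDerivAt x' (x'' z) z)
    (hx''c : ContinuousOn x'' (Icc 0 l))
    (hx0 : x 0 = 0) (hxl : x l = 0)
    (y ξ₂ : ℝ)
    (ξ₁ ξ₁' : ℝ → ℝ) (hξ₁ : ∀ z ∈ Icc (0:ℝ) l, HasDerivAt ξ₁ (ξ₁' z) z)
    (hξ₁'c : ContinuousOn ξ₁' (Icc 0 l)) (hξ₁0 : ξ₁ 0 = 0) (hξ₁l : ξ₁ l = 0) :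
    (2 * c^2 - ε) * y^2 + (2 * π^2 * a^2 / l^2 - ε) * (L2norm l x')^2 -
      2 * ((l / π) * L2norm l D + L2norm l B') * L2norm l x' * |y| -
      ε⁻¹ * ((L2norm l ξ₁')^2 + ξ₂^2) ≤
    2 * y * (c^2 * y + (∫ z in (0:ℝ)..l, D z * x z) + ξ₂) +
      2 * (∫ z in (0:ℝ)..l, x'' z * (a^2 * x'' z + Φ (x z) + B z * y + ξ₁ z)) := by
  have hπ := Real.pi_pos
  have huI : uIcc (0:ℝ) l = Icc 0 l := uIcc_of_le hl.le
  -- continuity facts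
  have hxc : ContinuousOn x (Icc 0 l) := fun z hz => (hx z hz).continuousAt.continuousWithinAt
  have hx'c : ContinuousOn x' (Icc 0 l) := fun z hz => (hx' z hz).continuousAt.continuousWithinAt
  have hBc : ContinuousOn B (Icc 0 l) := fun z hz => (hB z hz).continuousAt.continuousWithinAt
  have hξc : ContinuousOn ξ₁ (Icc 0 l) := fun z hz => (hξ₁ z hz).continuousAt.continuousWithinAt
  have hΦcont : Continuous Φ := continuous_iff_continuousAt.mpr fun s => (hΦd s).continuousAt
  have hΦxc : ContinuousOn (fun z => Φ (x z)) (Icc 0 l) := hΦcont.comp_continuousOn hxc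
  have hΦ'xc : ContinuousOn (fun z => Φ' (x z)) (Icc 0 l) := hΦ'c.comp_continuousOn hxc
  -- Φ 0 = 0
  have hΦ0 : Φ 0 = 0 := by
    have ht1 : Tendsto Φ (𝓝[>] (0:ℝ)) (𝓝 (Φ 0)) :=
      (hΦcont.tendsto 0).mono_left nhdsWithin_le_nhds
    have ht2 : Tendsto Φ (𝓝[<] (0:ℝ)) (𝓝 (Φ 0)) :=
      (hΦcont.tendsto 0).mono_left nhdsWithin_le_nhds
    have h1 : Φ 0 ≤ 0 := by
      refine le_of_tendsto ht1 ?_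
      filter_upwards [self_mem_nhdsWithin] with s (hs : 0 < s)
      rcases mul_nonpos_iff.mp (hΦ s) with h | h
      · linarith only [h.1, h.2, hs]
      · linarith only [h.1, h.2, hs]
    have h2 : 0 ≤ Φ 0 := by
      refine ge_of_tendsto ht2 ?_
      filter_upwards [self_mem_nhdsWithin] with s (hs : s < 0)
      rcases mul_nonpos_iff.mp (hΦ s) with h | h
      · linarith only [h.1, h.2, hs]
      · linarith only [h.1, h.2, hs]
    linarith
  -- integrability
  have iD : IntervalIntegrable (fun z => D z * x z) volume 0 l := II_of_cont hl.le (hD.mul hxc)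
  have ix2 : IntervalIntegrable (fun z => (x'' z)^2) volume 0 l := II_of_cont hl.le (hx''c.pow 2)
  have iΦ : IntervalIntegrable (fun z => Φ (x z) * x'' z) volume 0 l := II_of_cont hl.le (hΦxc.mul hx''c)
  have iB : IntervalIntegrable (fun z => B z * x'' z) volume 0 l := II_of_cont hl.le (hBc.mul hx''c)
  have iξ : IntervalIntegrable (fun z => ξ₁ z * x'' z) volume 0 l := II_of_cont hl.le (hξc.mul hx''c)
  have ix'' : IntervalIntegrable x'' volume 0 l := II_of_cont hl.le hx''c
  have iΦ' : IntervalIntegrable (fun z => Φ' (x z) * x' z) volume 0 l :=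
    II_of_cont hl.le (hΦ'xc.mul hx'c)
  have iB' : IntervalIntegrable (fun z => B' z * x' z) volume 0 l := II_of_cont hl.le (hB'c.mul hx'c)
  have iξ' : IntervalIntegrable (fun z => ξ₁' z * x' z) volume 0 l := II_of_cont hl.le (hξ₁'c.mul hx'c)
  have ix' : IntervalIntegrable x' volume 0 l := II_of_cont hl.le hx'c
  have ix'x' : IntervalIntegrable (fun z => x' z * x' z) volume 0 l := II_of_cont hl.le (hx'c.mul hx'c)
  -- expand the second integral
  have hexpand : (∫ z in (0:ℝ)..l, x'' z * (a^2 * x'' z + Φ (x z) + B z * y + ξ₁ z))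
      = a^2 * (∫ z in (0:ℝ)..l, (x'' z)^2) + (∫ z in (0:ℝ)..l, Φ (x z) * x'' z)
        + y * (∫ z in (0:ℝ)..l, B z * x'' z) + (∫ z in (0:ℝ)..l, ξ₁ z * x'' z) := by
    have h1 : (fun z => x'' z * (a^2 * x'' z + Φ (x z) + B z * y + ξ₁ z))
        = fun z => a^2 * (x'' z)^2 + (Φ (x z) * x'' z + (y * (B z * x'' z) + ξ₁ z * x'' z)) := by
      funext z; ring
    rw [h1, intervalIntegral.integral_add (ix2.const_mul (a^2)) (iΦ.add ((iB.const_mul y).add iξ)),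
      intervalIntegral.integral_add iΦ ((iB.const_mul y).add iξ),
      intervalIntegral.integral_add (iB.const_mul y) iξ,
      intervalIntegral.integral_const_mul, intervalIntegral.integral_const_mul]
    ring
  -- integration by parts results
  have hPΦ : (∫ z in (0:ℝ)..l, Φ (x z) * x'' z)
      = - ∫ z in (0:ℝ)..l, (Φ' (x z) * x' z) * x' z := by
    have h := intervalIntegral.integral_mul_deriv_eq_deriv_mul
      (u := fun z => Φ (x z)) (u' := fun z => Φ' (x z) * x' z) (v := x') (v' := x'')
      (fun z hz => (hΦd (x z)).comp z (hx z (huI ▸ hz)))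
      (fun z hz => hx' z (huI ▸ hz)) iΦ' ix''
    rw [h]
    simp [hx0, hxl, hΦ0]
  have hPB : (∫ z in (0:ℝ)..l, B z * x'' z) = - ∫ z in (0:ℝ)..l, B' z * x' z := by
    have h := intervalIntegral.integral_mul_deriv_eq_deriv_mul
      (u := B) (u' := B') (v := x') (v' := x'')
      (fun z hz => hB z (huI ▸ hz)) (fun z hz => hx' z (huI ▸ hz)) (II_of_cont hl.le hB'c) ix''
    rw [h]
    simp [hB0, hBl]
  have hPξ : (∫ z in (0:ℝ)..l, ξ₁ z * x'' z) = - ∫ z in (0:ℝ)..l, ξ₁' z * x' z := by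
    have h := intervalIntegral.integral_mul_deriv_eq_deriv_mul
      (u := ξ₁) (u' := ξ₁') (v := x') (v' := x'')
      (fun z hz => hξ₁ z (huI ▸ hz)) (fun z hz => hx' z (huI ▸ hz)) (II_of_cont hl.le hξ₁'c) ix''
    rw [h]
    simp [hξ₁0, hξ₁l]
  have hPx : (∫ z in (0:ℝ)..l, x z * x'' z) = - ∫ z in (0:ℝ)..l, (x' z)^2 := by
    have h := intervalIntegral.integral_mul_deriv_eq_deriv_mul
      (u := x) (u' := x') (v := x') (v' := x'')
      (fun z hz => hx z (huI ▸ hz)) (fun z hz => hx' z (huI ▸ hz)) ix' ix''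
    rw [h]
    simp only [hx0, hxl, mul_zero, zero_mul, sub_zero, zero_sub, neg_inj]
    apply intervalIntegral.integral_congr
    intro z hz; simp [sq]
  -- norms
  set N1 := L2norm l x' with hN1def
  set ND := L2norm l D with hNDdef
  set NB := L2norm l B' with hNBdef
  set Nξ := L2norm l ξ₁' with hNξdef
  set Nx := Real.sqrt (∫ z in (0:ℝ)..l, (x z)^2) with hNxdef
  set N2 := Real.sqrt (∫ z in (0:ℝ)..l, (x'' z)^2) with hN2def
  have int_nonneg : ∀ h : ℝ → ℝ, 0 ≤ ∫ z in (0:ℝ)..l, (h z)^2 :=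
    fun h => intervalIntegral.integral_nonneg hl.le (fun u _ => sq_nonneg _)
  have hN1sq : N1^2 = ∫ z in (0:ℝ)..l, (x' z)^2 := Real.sq_sqrt (int_nonneg x')
  have hNxsq : Nx^2 = ∫ z in (0:ℝ)..l, (x z)^2 := Real.sq_sqrt (int_nonneg x)
  have hN2sq : N2^2 = ∫ z in (0:ℝ)..l, (x'' z)^2 := Real.sq_sqrt (int_nonneg x'')
  have hNξsq : Nξ^2 = ∫ z in (0:ℝ)..l, (ξ₁' z)^2 := Real.sq_sqrt (int_nonneg ξ₁')
  have hN1n : 0 ≤ N1 := Real.sqrt_nonneg _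
  have hNxn : 0 ≤ Nx := Real.sqrt_nonneg _
  have hN2n : 0 ≤ N2 := Real.sqrt_nonneg _
  have hNDn : 0 ≤ ND := Real.sqrt_nonneg _
  have hNBn : 0 ≤ NB := Real.sqrt_nonneg _
  have hNξn : 0 ≤ Nξ := Real.sqrt_nonneg _
  -- Wirtinger for x
  have hW : ∫ z in (0:ℝ)..l, (x z)^2 ≤ (l/π)^2 * ∫ z in (0:ℝ)..l, (x' z)^2 :=
    wirtinger l hl x x' hx hx'c hx0 hxl
  have hNx : Nx ≤ (l/π) * N1 := by
    rw [hNxdef]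
    calc Real.sqrt (∫ z in (0:ℝ)..l, (x z)^2)
        ≤ Real.sqrt ((l/π)^2 * ∫ z in (0:ℝ)..l, (x' z)^2) := Real.sqrt_le_sqrt hW
      _ = (l/π) * N1 := by
          rw [Real.sqrt_mul (sq_nonneg _), Real.sqrt_sq (by positivity : (0:ℝ) ≤ l/π)]
          rfl
  -- Cauchy-Schwarz bounds
  have cs1 : |∫ z in (0:ℝ)..l, D z * x z| ≤ ND * Nx := cs_abs l hl.le D x hD hxc
  have cs2 : |∫ z in (0:ℝ)..l, B' z * x' z| ≤ NB * N1 := cs_abs l hl.le B' x' hB'c hx'c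
  have cs3 : |∫ z in (0:ℝ)..l, ξ₁' z * x' z| ≤ Nξ * N1 := cs_abs l hl.le ξ₁' x' hξ₁'c hx'c
  have cs4 : |∫ z in (0:ℝ)..l, x z * x'' z| ≤ Nx * N2 := cs_abs l hl.le x x'' hxc hx''c
  -- N1^2 ≤ (l/π) * N2 * N1, hence (π/l)^2 N1^2 ≤ N2^2
  have hkey : N1^2 ≤ (l/π) * N1 * N2 := by
    have h1 : N1^2 = - ∫ z in (0:ℝ)..l, x z * x'' z := by rw [hPx, hN1sq]; ring
    have h2 : - ∫ z in (0:ℝ)..l, x z * x'' z ≤ |∫ z in (0:ℝ)..l, x z * x'' z| := neg_le_abs _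
    calc N1^2 ≤ Nx * N2 := by rw [h1]; exact h2.trans cs4
      _ ≤ ((l/π) * N1) * N2 := mul_le_mul_of_nonneg_right hNx hN2n
      _ = (l/π) * N1 * N2 := by ring
  have hN1N2 : N1 ≤ (l/π) * N2 := by
    rcases eq_or_lt_of_le hN1n with h | h
    · rw [← h]; positivity
    · exact (mul_le_mul_iff_of_pos_right h).mp (by linarith only [hkey] : N1 * N1 ≤ ((l/π) * N2) * N1)
  have hF6 : π^2/l^2 * N1^2 ≤ ∫ z in (0:ℝ)..l, (x'' z)^2 := by
    have h1 : N1^2 ≤ ((l/π) * N2)^2 := pow_le_pow_left₀ hN1n hN1N2 2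
    rw [← hN2sq]
    calc π^2/l^2 * N1^2 ≤ π^2/l^2 * ((l/π) * N2)^2 :=
          mul_le_mul_of_nonneg_left h1 (by positivity)
      _ = N2^2 := by field_simp
  -- Φ term nonnegative
  have hFΦ : 0 ≤ ∫ z in (0:ℝ)..l, Φ (x z) * x'' z := by
    rw [hPΦ]
    have h1 : (0:ℝ) ≤ ∫ z in (0:ℝ)..l, -(Φ' (x z) * x' z * x' z) :=
      intervalIntegral.integral_nonneg hl.le (fun u _ => by
        have h := mul_nonneg (neg_nonneg.mpr (hΦ'le (x u))) (sq_nonneg (x' u))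
        linarith only [h])
    rw [intervalIntegral.integral_neg] at h1
    linarith [h1]
  -- bounds for the cross terms
  set JD := ∫ z in (0:ℝ)..l, D z * x z with hJD
  set JB := ∫ z in (0:ℝ)..l, B' z * x' z with hJB
  set Jξ := ∫ z in (0:ℝ)..l, ξ₁' z * x' z with hJξ
  have hFD : -(|y| * (ND * ((l/π) * N1))) ≤ y * JD := by
    have h1 : |y * JD| ≤ |y| * (ND * ((l/π) * N1)) := by
      rw [abs_mul]
      refine mul_le_mul_of_nonneg_left (cs1.trans ?_) (abs_nonneg y)
      exact mul_le_mul_of_nonneg_left hNx hNDn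
    linarith [neg_abs_le (y * JD), h1]
  have hFB : -(|y| * (NB * N1)) ≤ y * (- JB) := by
    have h1 : |y * JB| ≤ |y| * (NB * N1) := by
      rw [abs_mul]
      exact mul_le_mul_of_nonneg_left cs2 (abs_nonneg y)
    linarith only [h1, le_abs_self (y * JB)]
  have hFξ : -(ε * N1^2 + ε⁻¹ * Nξ^2) ≤ 2 * (- Jξ) := by
    have h1 : 2 * Nξ * N1 ≤ ε * N1^2 + ε⁻¹ * Nξ^2 := by
      linarith only [young ε N1 Nξ hε]
    linarith only [cs3, h1, le_abs_self Jξ]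
  have hF4 : -(ε * y^2 + ε⁻¹ * ξ₂^2) ≤ 2 * (y * ξ₂) := by
    have h1 : 2 * |y| * |ξ₂| ≤ ε * |y|^2 + ε⁻¹ * |ξ₂|^2 := young ε |y| |ξ₂| hε
    have h2 := neg_abs_le (y * ξ₂)
    rw [sq_abs, sq_abs] at h1
    rw [abs_mul] at h2
    linarith only [h1, h2]
  -- final assembly
  rw [hexpand, hPB, hPξ]
  have hF6' := mul_le_mul_of_nonneg_left hF6 (by positivity : (0:ℝ) ≤ 2 * a^2)
  have hrw : 2 * π^2 * a^2 / l^2 - ε = 2 * a^2 * (π^2/l^2) - ε := by ring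
  rw [hrw]
  linarith only [hF6', hFΦ, hFD, hFB, hFξ, hF4]
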